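/- β-reduction and commuting-conversion reduction commute: if t ⇝_β* u and t ⇝_cc* u', then there exists a term v such that u ⇝_cc* v and u' ⇝_β* v. -/

import Mathlib

namespace STLCp

/-- Types of the simply-typed λ-calculus with sums, over base types `B`. -/
inductive Ty (B : Type) : Type
  | base : B → Ty B
  | unit : Ty B
  | empty : Ty B
  | prod : Ty B → Ty B → Ty B
  | sum : Ty B → Ty B → Ty B
  | arr : Ty B → Ty B → Ty B

/-- Terms (de Bruijn style) over a set of constants `C`. -/
inductive Tm (C : Type) : Type
  | cst : C → Tm C
  | var : Nat → Tm C
  | star : Tm C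
  | pair : Tm C → Tm C → Tm C
  | proj1 : Tm C → Tm C
  | proj2 : Tm C → Tm C
  | lam : Tm C → Tm C
  | app : Tm C → Tm C → Tm C
  | inl : Tm C → Tm C
  | inr : Tm C → Tm C
  | raise : Tm C → Tm C
  | case : Tm C → Tm C → Tm C → Tm C

variable {B C : Type}

/-- Lifting a renaming under a binder. -/
def liftRen (ρ : Nat → Nat) : Nat → Nat
  | 0 => 0
  | n + 1 => ρ n + 1

/-- Action of renamings on terms. -/
def rename (ρ : Nat → Nat) : Tm C → Tm C
  | .cst c => .cst c
  | .var n => .var (ρ n)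
  | .star => .star
  | .pair t u => .pair (rename ρ t) (rename ρ u)
  | .proj1 t => .proj1 (rename ρ t)
  | .proj2 t => .proj2 (rename ρ t)
  | .lam t => .lam (rename (liftRen ρ) t)
  | .app t u => .app (rename ρ t) (rename ρ u)
  | .inl t => .inl (rename ρ t)
  | .inr t => .inr (rename ρ t)
  | .raise t => .raise (rename ρ t)
  | .case s bl br => .case (rename ρ s) (rename (liftRen ρ) bl) (rename (liftRen ρ) br)

/-- Lifting a parallel substitution under a binder. -/
def liftSub (σ : Nat → Tm C) : Nat → Tm C
  | 0 => .var 0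
  | n + 1 => rename Nat.succ (σ n)

/-- Action of parallel substitutions on terms, `t[σ]`. -/
def subst (σ : Nat → Tm C) : Tm C → Tm C
  | .cst c => .cst c
  | .var n => σ n
  | .star => .star
  | .pair t u => .pair (subst σ t) (subst σ u)
  | .proj1 t => .proj1 (subst σ t)
  | .proj2 t => .proj2 (subst σ t)
  | .lam t => .lam (subst (liftSub σ) t)
  | .app t u => .app (subst σ t) (subst σ u)
  | .inl t => .inl (subst σ t)
  | .inr t => .inr (subst σ t)
  | .raise t => .raise (subst σ t)
  | .case s bl br => .case (subst σ s) (subst (liftSub σ) bl) (subst (liftSub σ) br)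

/-- The substitution `u..`: maps the last variable to `u`, the identity elsewhere. -/
def sub0 (u : Tm C) : Nat → Tm C
  | 0 => u
  | n + 1 => .var n

/-- Eliminations: application, projections and case analysis. -/
inductive Elim (C : Type) : Type
  | eapp : Tm C → Elim C
  | eproj1 : Elim C
  | eproj2 : Elim C
  | ecase : Tm C → Tm C → Elim C

/-- Plugging a term into an elimination, `e[t]`. -/
def plug : Elim C → Tm C → Tm C
  | .eapp u, t => .app t u
  | .eproj1, t => .proj1 t
  | .eproj2, t => .proj2 t
  | .ecase bl br, t => .case t bl br

/-- Weakening the contents of an elimination (used when pushing it under a binder). -/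
def weakenElim : Elim C → Elim C
  | .eapp u => .eapp (rename Nat.succ u)
  | .eproj1 => .eproj1
  | .eproj2 => .eproj2
  | .ecase bl br => .ecase (rename (liftRen Nat.succ) bl) (rename (liftRen Nat.succ) br)

/-- The β-rules. -/
inductive BetaBase : Tm C → Tm C → Prop
  | proj1 (t u : Tm C) : BetaBase (.proj1 (.pair t u)) t
  | proj2 (t u : Tm C) : BetaBase (.proj2 (.pair t u)) u
  | app (t u : Tm C) : BetaBase (.app (.lam t) u) (subst (sub0 u) t)
  | case_inl (a bl br : Tm C) : BetaBase (.case (.inl a) bl br) (subst (sub0 a) bl)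
  | case_inr (b bl br : Tm C) : BetaBase (.case (.inr b) bl br) (subst (sub0 b) br)

/-- The commuting-conversion rules. -/
inductive CCBase : Tm C → Tm C → Prop
  | raise (e : Elim C) (t : Tm C) : CCBase (plug e (.raise t)) (.raise t)
  | case (e : Elim C) (s bl br : Tm C) :
      CCBase (plug e (.case s bl br))
        (.case s (plug (weakenElim e) bl) (plug (weakenElim e) br))

/-- Congruence closure of a base relation on terms. -/
inductive Cong (R : Tm C → Tm C → Prop) : Tm C → Tm C → Prop
  | base : R t u → Cong R t u
  | pairL : Cong R t t' → Cong R (.pair t u) (.pair t' u)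
  | pairR : Cong R u u' → Cong R (.pair t u) (.pair t u')
  | proj1 : Cong R t t' → Cong R (.proj1 t) (.proj1 t')
  | proj2 : Cong R t t' → Cong R (.proj2 t) (.proj2 t')
  | lam : Cong R t t' → Cong R (.lam t) (.lam t')
  | appL : Cong R t t' → Cong R (.app t u) (.app t' u)
  | appR : Cong R u u' → Cong R (.app t u) (.app t u')
  | inl : Cong R t t' → Cong R (.inl t) (.inl t')
  | inr : Cong R t t' → Cong R (.inr t) (.inr t')
  | raise : Cong R t t' → Cong R (.raise t) (.raise t')
  | caseS : Cong R s s' → Cong R (.case s bl br) (.case s' bl br)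
  | caseL : Cong R bl bl' → Cong R (.case s bl br) (.case s bl' br)
  | caseR : Cong R br br' → Cong R (.case s bl br) (.case s bl br')

/-- One-step β-reduction. -/
def StepBeta : Tm C → Tm C → Prop := Cong BetaBase

/-- One-step commuting-conversion reduction. -/
def StepCC : Tm C → Tm C → Prop := Cong CCBase

/-- One-step reduction (β-rules together with commuting conversions). -/
def Step : Tm C → Tm C → Prop := Cong (fun t u => BetaBase t u ∨ CCBase t u)

/-- Reflexive-transitive closures. -/
def RedsBeta : Tm C → Tm C → Prop := Relation.ReflTransGen StepBeta
def RedsCC : Tm C → Tm C → Prop := Relation.ReflTransGen StepCC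
def Reds : Tm C → Tm C → Prop := Relation.ReflTransGen Step

/-- Typing judgment `Γ ⊢ t : A` over a language given by `tyof : C → Ty B`.
Contexts are lists of types, the head being the last-bound variable. -/
inductive HasType (tyof : C → Ty B) : List (Ty B) → Tm C → Ty B → Prop
  | cst (Γ) (c : C) : HasType tyof Γ (.cst c) (tyof c)
  | var : Γ[n]? = some A → HasType tyof Γ (.var n) A
  | star : HasType tyof Γ .star .unit
  | pair : HasType tyof Γ t A → HasType tyof Γ u A' →
      HasType tyof Γ (.pair t u) (.prod A A')
  | proj1 : HasType tyof Γ p (.prod A A') → HasType tyof Γ (.proj1 p) A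
  | proj2 : HasType tyof Γ p (.prod A A') → HasType tyof Γ (.proj2 p) A'
  | lam : HasType tyof (A :: Γ) t A' → HasType tyof Γ (.lam t) (.arr A A')
  | app : HasType tyof Γ t (.arr A A') → HasType tyof Γ u A →
      HasType tyof Γ (.app t u) A'
  | raise : HasType tyof Γ t .empty → HasType tyof Γ (.raise t) A
  | inl : HasType tyof Γ a A → HasType tyof Γ (.inl a) (.sum A A')
  | inr : HasType tyof Γ b A' → HasType tyof Γ (.inr b) (.sum A A')
  | case : HasType tyof Γ s (.sum A A') → HasType tyof (A :: Γ) bl T →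
      HasType tyof (A' :: Γ) br T → HasType tyof Γ (.case s bl br) T

mutual
  /-- Bidirectional checking judgment `Γ ⊢ t ⇐ A` (normal forms). -/
  inductive Check (tyof : C → Ty B) : List (Ty B) → Tm C → Ty B → Prop
    | star : Check tyof Γ .star .unit
    | pair : Check tyof Γ t A → Check tyof Γ u A' →
        Check tyof Γ (.pair t u) (.prod A A')
    | lam : Check tyof (A :: Γ) t A' → Check tyof Γ (.lam t) (.arr A A')
    | inl : Check tyof Γ a A → Check tyof Γ (.inl a) (.sum A A')
    | inr : Check tyof Γ b A' → Check tyof Γ (.inr b) (.sum A A')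
    | demote : Infer tyof Γ t A → A = A' → Check tyof Γ t A'
    | raise : Infer tyof Γ t .empty → Check tyof Γ (.raise t) A
    | case : Infer tyof Γ s (.sum A A') → Check tyof (A :: Γ) bl T →
        Check tyof (A' :: Γ) br T → Check tyof Γ (.case s bl br) T

  /-- Bidirectional inference judgment `Γ ⊢ t ⇒ A` (neutral forms). -/
  inductive Infer (tyof : C → Ty B) : List (Ty B) → Tm C → Ty B → Prop
    | cst (Γ) (c : C) : Infer tyof Γ (.cst c) (tyof c)
    | var : Γ[n]? = some A → Infer tyof Γ (.var n) A
    | proj1 : Infer tyof Γ p (.prod A A') → Infer tyof Γ (.proj1 p) A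
    | proj2 : Infer tyof Γ p (.prod A A') → Infer tyof Γ (.proj2 p) A'
    | app : Infer tyof Γ t (.arr A A') → Check tyof Γ u A →
        Infer tyof Γ (.app t u) A'
end

/-- The substitution replacing the last variable by `inl` of itself
(used in the η-law for sums). -/
def inlSub : Nat → Tm C
  | 0 => .inl (.var 0)
  | n + 1 => .var (n + 1)

/-- The substitution replacing the last variable by `inr` of itself. -/
def inrSub : Nat → Tm C
  | 0 => .inr (.var 0)
  | n + 1 => .var (n + 1)

/-- Conversion `Γ ⊢ t ≡ u : A`: the least congruent equivalence relation on
well-typed terms containing the β and η laws for all type formers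
(the equational theory of bicartesian closed categories). -/
inductive Conv (tyof : C → Ty B) : List (Ty B) → Tm C → Tm C → Ty B → Prop
  | refl : HasType tyof Γ t A → Conv tyof Γ t t A
  | symm : Conv tyof Γ t u A → Conv tyof Γ u t A
  | trans : Conv tyof Γ t u A → Conv tyof Γ u v A → Conv tyof Γ t v A
  -- congruence
  | pair : Conv tyof Γ t t' A → Conv tyof Γ u u' A' →
      Conv tyof Γ (.pair t u) (.pair t' u') (.prod A A')
  | proj1 : Conv tyof Γ p p' (.prod A A') → Conv tyof Γ (.proj1 p) (.proj1 p') A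
  | proj2 : Conv tyof Γ p p' (.prod A A') → Conv tyof Γ (.proj2 p) (.proj2 p') A'
  | lam : Conv tyof (A :: Γ) t t' A' → Conv tyof Γ (.lam t) (.lam t') (.arr A A')
  | app : Conv tyof Γ t t' (.arr A A') → Conv tyof Γ u u' A →
      Conv tyof Γ (.app t u) (.app t' u') A'
  | inl : Conv tyof Γ a a' A → Conv tyof Γ (.inl a) (.inl a') (.sum A A')
  | inr : Conv tyof Γ b b' A' → Conv tyof Γ (.inr b) (.inr b') (.sum A A')
  | raise : Conv tyof Γ t t' .empty → Conv tyof Γ (.raise t) (.raise t') A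
  | case : Conv tyof Γ s s' (.sum A A') → Conv tyof (A :: Γ) bl bl' T →
      Conv tyof (A' :: Γ) br br' T →
      Conv tyof Γ (.case s bl br) (.case s' bl' br') T
  -- β laws
  | beta_proj1 : HasType tyof Γ t A → HasType tyof Γ u A' →
      Conv tyof Γ (.proj1 (.pair t u)) t A
  | beta_proj2 : HasType tyof Γ t A → HasType tyof Γ u A' →
      Conv tyof Γ (.proj2 (.pair t u)) u A'
  | beta_app : HasType tyof (A :: Γ) t A' → HasType tyof Γ u A →
      Conv tyof Γ (.app (.lam t) u) (subst (sub0 u) t) A'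
  | beta_inl : HasType tyof Γ a A → HasType tyof (A :: Γ) bl T →
      HasType tyof (A' :: Γ) br T →
      Conv tyof Γ (.case (.inl a) bl br) (subst (sub0 a) bl) T
  | beta_inr : HasType tyof Γ b A' → HasType tyof (A :: Γ) bl T →
      HasType tyof (A' :: Γ) br T →
      Conv tyof Γ (.case (.inr b) bl br) (subst (sub0 b) br) T
  -- η laws
  | eta_unit : HasType tyof Γ t .unit → Conv tyof Γ t .star .unit
  | eta_prod : HasType tyof Γ t (.prod A A') →
      Conv tyof Γ t (.pair (.proj1 t) (.proj2 t)) (.prod A A')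
  | eta_arr : HasType tyof Γ t (.arr A A') →
      Conv tyof Γ t (.lam (.app (rename Nat.succ t) (.var 0))) (.arr A A')
  | eta_empty : HasType tyof Γ s .empty → HasType tyof Γ u T →
      Conv tyof Γ u (.raise s) T
  | eta_sum : HasType tyof Γ s (.sum A A') → HasType tyof (.sum A A' :: Γ) u T →
      Conv tyof Γ (subst (sub0 s) u)
        (.case s (subst inlSub u) (subst inrSub u)) T

/-- `t` is covered by the predicate `F`: `t` is a case tree whose nodes are
eliminations of neutrals at positive types and whose leaves satisfy `F`
(in suitably extended contexts). -/
inductive Covered (tyof : C → Ty B) (F : List (Ty B) → Tm C → Prop) :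
    List (Ty B) → Tm C → Prop
  | leaf : F Γ t → Covered tyof F Γ t
  | raise : Infer tyof Γ n .empty → Covered tyof F Γ (.raise n)
  | case : Infer tyof Γ n (.sum A A') → Covered tyof F (A :: Γ) bl →
      Covered tyof F (A' :: Γ) br → Covered tyof F Γ (.case n bl br)

/-- `ρ` is a (typed) renaming from `Δ` to `Γ`. -/
def IsRen (ρ : Nat → Nat) (Δ Γ : List (Ty B)) : Prop :=
  ∀ n A, Γ[n]? = some A → Δ[ρ n]? = some A

/-- Values at a type, defined by induction on the type (logical relation). -/
def Value (tyof : C → Ty B) : Ty B → List (Ty B) → Tm C → Prop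
  | .base b => Covered tyof (fun Δ u => Infer tyof Δ u (.base b))
  | .empty => Covered tyof (fun Δ u => Infer tyof Δ u .empty)
  | .sum A A' => Covered tyof (fun Δ u =>
      Infer tyof Δ u (.sum A A') ∨
      (∃ a, u = .inl a ∧ Value tyof A Δ a) ∨
      (∃ b, u = .inr b ∧ Value tyof A' Δ b))
  | .unit => fun Γ t => Check tyof Γ t .unit
  | .prod A A' => fun Γ t => Check tyof Γ t (.prod A A') ∧
      (∃ v, Reds (.proj1 t) v ∧ Value tyof A Γ v) ∧
      (∃ v, Reds (.proj2 t) v ∧ Value tyof A' Γ v)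
  | .arr A A' => fun Γ t => Check tyof Γ t (.arr A A') ∧
      ∀ Δ ρ, IsRen ρ Δ Γ → ∀ u, Value tyof A Δ u →
        ∃ v, Reds (.app (rename ρ t) u) v ∧ Value tyof A' Δ v

/-- `t` is reducible at `T` in `Γ`: it reduces to a value at `T`. -/
def Reducible (tyof : C → Ty B) (T : Ty B) (Γ : List (Ty B)) (t : Tm C) : Prop :=
  ∃ v, Reds t v ∧ Value tyof T Γ v

/-- Polarised vocabulary of a type: `voc true A = A⁺`, `voc false A = A⁻`. -/
def voc (p : Bool) : Ty B → Set B
  | .base b => if p then {b} else ∅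
  | .unit => ∅
  | .empty => ∅
  | .prod A A' => voc p A ∪ voc p A'
  | .sum A A' => voc p A ∪ voc p A'
  | .arr A A' => voc (!p) A ∪ voc p A'

/-- Polarised vocabulary of a context. -/
def vocCtx (p : Bool) (Γ : List (Ty B)) : Set B :=
  {b | ∃ A ∈ Γ, b ∈ voc p A}

/-- Context partitions `Γ = Γs ⋈ Γt`. -/
inductive Splits {B : Type} : List (Ty B) → List (Ty B) → List (Ty B) → Type
  | nil : Splits [] [] []
  | left (A : Ty B) : Splits Γ Γs Γt → Splits (A :: Γ) (A :: Γs) Γt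
  | right (A : Ty B) : Splits Γ Γs Γt → Splits (A :: Γ) Γs (A :: Γt)

/-- The renaming embedding `Γs` into `Γ` induced by a partition. -/
def Splits.renS {B : Type} : {Γ Γs Γt : List (Ty B)} → Splits Γ Γs Γt → Nat → Nat
  | _, _, _, .nil => id
  | _, _, _, .left _ s => fun n => match n with | 0 => 0 | m + 1 => s.renS m + 1
  | _, _, _, .right _ s => fun n => s.renS n + 1

/-- The renaming embedding `Γt` into `Γ` induced by a partition. -/
def Splits.renT {B : Type} : {Γ Γs Γt : List (Ty B)} → Splits Γ Γs Γt → Nat → Nat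
  | _, _, _, .nil => id
  | _, _, _, .left _ s => fun n => s.renT n + 1
  | _, _, _, .right _ s => fun n => match n with | 0 => 0 | m + 1 => s.renT m + 1

/-- The composite `r[l..]` where `l` lives in one part of the context
(embedded via `ρl`) and the tail variables of `r` live in the other part
(embedded via `ρr`); the result lives in the full context. -/
def splice (ρl ρr : Nat → Nat) (l r : Tm C) : Tm C :=
  subst (fun n => match n with
    | 0 => rename ρl l
    | m + 1 => .var (ρr m)) r

/-- The (empty) constant-typing function for a language without constants. -/
def noCst {B : Type} : Empty → Ty B := fun c => c.elim

/-- The set of constants occurring in a term. -/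
def constsOf : Tm C → Set C
  | .cst c => {c}
  | .var _ => ∅
  | .star => ∅
  | .pair t u => constsOf t ∪ constsOf u
  | .proj1 t => constsOf t
  | .proj2 t => constsOf t
  | .lam t => constsOf t
  | .app t u => constsOf t ∪ constsOf u
  | .inl t => constsOf t
  | .inr t => constsOf t
  | .raise t => constsOf t
  | .case s bl br => constsOf s ∪ constsOf bl ∪ constsOf br


section Aux
variable {C : Type}

@[simp] lemma liftRen_zero (ρ : Nat → Nat) : liftRen ρ 0 = 0 := rfl
@[simp] lemma liftRen_succ (ρ : Nat → Nat) (n) : liftRen ρ (n+1) = ρ n + 1 := rfl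

lemma liftRen_comp (ρ ρ' : Nat → Nat) : liftRen ρ ∘ liftRen ρ' = liftRen (ρ ∘ ρ') := by
  funext n; cases n <;> rfl

lemma rename_rename (ρ ρ' : Nat → Nat) (t : Tm C) :
    rename ρ (rename ρ' t) = rename (ρ ∘ ρ') t := by
  induction t generalizing ρ ρ' <;> simp [rename, liftRen_comp, *]

lemma liftSub_liftRen (σ : Nat → Tm C) (ρ : Nat → Nat) :
    (liftSub σ ∘ liftRen ρ) = liftSub (σ ∘ ρ) := by
  funext n; cases n <;> rfl

lemma subst_rename (σ : Nat → Tm C) (ρ : Nat → Nat) (t : Tm C) :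
    subst σ (rename ρ t) = subst (σ ∘ ρ) t := by
  induction t generalizing σ ρ <;> simp [rename, subst, liftSub_liftRen, *]

lemma liftRen_liftSub (ρ : Nat → Nat) (σ : Nat → Tm C) :
    (rename (liftRen ρ) ∘ liftSub σ) = liftSub (rename ρ ∘ σ) := by
  funext n; cases n with
  | zero => rfl
  | succ n =>
    simp only [Function.comp, liftSub, rename_rename]
    congr 1

lemma rename_subst (ρ : Nat → Nat) (σ : Nat → Tm C) (t : Tm C) :
    rename ρ (subst σ t) = subst (rename ρ ∘ σ) t := by
  induction t generalizing σ ρ <;> simp [rename, subst, liftRen_liftSub, *]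

lemma liftSub_comp (σ σ' : Nat → Tm C) :
    (fun n => subst (liftSub σ) (liftSub σ' n)) = liftSub (fun n => subst σ (σ' n)) := by
  funext n; cases n with
  | zero => rfl
  | succ n =>
    simp only [liftSub, subst_rename, rename_subst]
    rfl

lemma subst_subst (σ σ' : Nat → Tm C) (t : Tm C) :
    subst σ (subst σ' t) = subst (fun n => subst σ (σ' n)) t := by
  induction t generalizing σ σ' <;> simp [subst, liftSub_comp, *]

lemma liftSub_var : liftSub (.var : Nat → Tm C) = .var := by
  funext n; cases n <;> rfl

lemma subst_id (t : Tm C) : subst .var t = t := by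
  induction t <;> simp [subst, liftSub_var, *]

lemma rename_subst0 (ρ : Nat → Nat) (u t : Tm C) :
    rename ρ (subst (sub0 u) t) = subst (sub0 (rename ρ u)) (rename (liftRen ρ) t) := by
  rw [rename_subst, subst_rename]
  congr 1
  funext n; cases n <;> rfl

lemma subst0_rename (u t : Tm C) : subst (sub0 u) (rename Nat.succ t) = t := by
  rw [subst_rename]
  have : (sub0 u ∘ Nat.succ : Nat → Tm C) = .var := by funext n; rfl
  rw [this, subst_id]

lemma subst0_lift_rename (u t : Tm C) :
    subst (liftSub (sub0 u)) (rename (liftRen Nat.succ) t) = t := by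
  rw [subst_rename]
  have : (liftSub (sub0 u) ∘ liftRen Nat.succ : Nat → Tm C) = .var := by
    funext n; cases n <;> rfl
  rw [this, subst_id]

end Aux

section Aux2
variable {C : Type}

/-- Renaming an elimination. -/
def renameElim (ρ : Nat → Nat) : Elim C → Elim C
  | .eapp u => .eapp (rename ρ u)
  | .eproj1 => .eproj1
  | .eproj2 => .eproj2
  | .ecase bl br => .ecase (rename (liftRen ρ) bl) (rename (liftRen ρ) br)

/-- Substituting in an elimination. -/
def substElim (σ : Nat → Tm C) : Elim C → Elim C
  | .eapp u => .eapp (subst σ u)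
  | .eproj1 => .eproj1
  | .eproj2 => .eproj2
  | .ecase bl br => .ecase (subst (liftSub σ) bl) (subst (liftSub σ) br)

lemma plug_rename (ρ : Nat → Nat) (e : Elim C) (t : Tm C) :
    rename ρ (plug e t) = plug (renameElim ρ e) (rename ρ t) := by
  cases e <;> rfl

lemma plug_subst (σ : Nat → Tm C) (e : Elim C) (t : Tm C) :
    subst σ (plug e t) = plug (substElim σ e) (subst σ t) := by
  cases e <;> rfl

lemma ren_comm_succ (ρ : Nat → Nat) (u : Tm C) :
    rename Nat.succ (rename ρ u) = rename (liftRen ρ) (rename Nat.succ u) := by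
  rw [rename_rename, rename_rename]; congr 1

lemma ren_comm_lift (ρ : Nat → Nat) (c : Tm C) :
    rename (liftRen Nat.succ) (rename (liftRen ρ) c)
      = rename (liftRen (liftRen ρ)) (rename (liftRen Nat.succ) c) := by
  rw [rename_rename, rename_rename]; congr 1 <;> (funext n; cases n <;> rfl)

lemma sub_comm_succ (σ : Nat → Tm C) (u : Tm C) :
    rename Nat.succ (subst σ u) = subst (liftSub σ) (rename Nat.succ u) := by
  rw [rename_subst, subst_rename]; congr 1

lemma sub_comm_lift (σ : Nat → Tm C) (c : Tm C) :
    rename (liftRen Nat.succ) (subst (liftSub σ) c)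
      = subst (liftSub (liftSub σ)) (rename (liftRen Nat.succ) c) := by
  rw [rename_subst, subst_rename, liftRen_liftSub, liftSub_liftRen]
  congr 1 <;> (funext n; cases n <;> rfl)

lemma weaken_rename (ρ : Nat → Nat) (e : Elim C) :
    weakenElim (renameElim ρ e) = renameElim (liftRen ρ) (weakenElim e) := by
  cases e <;> simp [weakenElim, renameElim, ren_comm_succ, ren_comm_lift]

lemma weaken_subst (σ : Nat → Tm C) (e : Elim C) :
    weakenElim (substElim σ e) = substElim (liftSub σ) (weakenElim e) := by
  cases e <;> simp [weakenElim, substElim, sub_comm_succ, sub_comm_lift]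

lemma ccbase_rename (ρ : Nat → Nat) {t u : Tm C} (h : CCBase t u) :
    CCBase (rename ρ t) (rename ρ u) := by
  cases h with
  | raise e r =>
    rw [plug_rename]
    exact CCBase.raise (renameElim ρ e) (rename ρ r)
  | case e s bl br =>
    rw [plug_rename]
    have := CCBase.case (renameElim ρ e) (rename ρ s)
      (rename (liftRen ρ) bl) (rename (liftRen ρ) br)
    simpa [rename, plug_rename, weaken_rename] using this

lemma ccbase_subst (σ : Nat → Tm C) {t u : Tm C} (h : CCBase t u) :
    CCBase (subst σ t) (subst σ u) := by
  cases h with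
  | raise e r =>
    rw [plug_subst]
    exact CCBase.raise (substElim σ e) (subst σ r)
  | case e s bl br =>
    rw [plug_subst]
    have := CCBase.case (substElim σ e) (subst σ s)
      (subst (liftSub σ) bl) (subst (liftSub σ) br)
    simpa [subst, plug_subst, weaken_subst] using this

lemma cong_rename {R : Tm C → Tm C → Prop}
    (hR : ∀ (ρ : Nat → Nat) (a b : Tm C), R a b → R (rename ρ a) (rename ρ b))
    (ρ : Nat → Nat) {t u : Tm C} (h : Cong R t u) :
    Cong R (rename ρ t) (rename ρ u) := by
  induction h generalizing ρ with
  | base h => exact .base (hR ρ _ _ h)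
  | pairL _ ih => exact .pairL (ih ρ)
  | pairR _ ih => exact .pairR (ih ρ)
  | proj1 _ ih => exact .proj1 (ih ρ)
  | proj2 _ ih => exact .proj2 (ih ρ)
  | lam _ ih => exact .lam (ih (liftRen ρ))
  | appL _ ih => exact .appL (ih ρ)
  | appR _ ih => exact .appR (ih ρ)
  | inl _ ih => exact .inl (ih ρ)
  | inr _ ih => exact .inr (ih ρ)
  | raise _ ih => exact .raise (ih ρ)
  | caseS _ ih => exact .caseS (ih ρ)
  | caseL _ ih => exact .caseL (ih (liftRen ρ))
  | caseR _ ih => exact .caseR (ih (liftRen ρ))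

lemma stepCC_rename (ρ : Nat → Nat) {t u : Tm C} (h : StepCC t u) :
    StepCC (rename ρ t) (rename ρ u) :=
  cong_rename (fun ρ _ _ h => ccbase_rename ρ h) ρ h

lemma stepCC_subst (σ : Nat → Tm C) {t u : Tm C} (h : StepCC t u) :
    StepCC (subst σ t) (subst σ u) := by
  induction h generalizing σ with
  | base h => exact .base (ccbase_subst σ h)
  | pairL _ ih => exact .pairL (ih σ)
  | pairR _ ih => exact .pairR (ih σ)
  | proj1 _ ih => exact .proj1 (ih σ)
  | proj2 _ ih => exact .proj2 (ih σ)
  | lam _ ih => exact .lam (ih (liftSub σ))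
  | appL _ ih => exact .appL (ih σ)
  | appR _ ih => exact .appR (ih σ)
  | inl _ ih => exact .inl (ih σ)
  | inr _ ih => exact .inr (ih σ)
  | raise _ ih => exact .raise (ih σ)
  | caseS _ ih => exact .caseS (ih σ)
  | caseL _ ih => exact .caseL (ih (liftSub σ))
  | caseR _ ih => exact .caseR (ih (liftSub σ))

lemma ccbase_inv {t u : Tm C} (h : CCBase t u) :
    (∃ e r, t = plug e (.raise r) ∧ u = .raise r) ∨
    (∃ e s bl br, t = plug e (.case s bl br) ∧
      u = .case s (plug (weakenElim e) bl) (plug (weakenElim e) br)) := by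
  cases h with
  | raise e r => exact .inl ⟨e, r, rfl, rfl⟩
  | case e s bl br => exact .inr ⟨e, s, bl, br, rfl, rfl⟩

end Aux2

section Aux3
variable {C : Type}
open Relation

-- generic congruence lift for reflexive-transitive closures of Cong R
lemma reds_lift {R : Tm C → Tm C → Prop} (f : Tm C → Tm C)
    (hf : ∀ {a b : Tm C}, Cong R a b → Cong R (f a) (f b))
    {t u : Tm C} (h : ReflTransGen (Cong R) t u) :
    ReflTransGen (Cong R) (f t) (f u) :=
  ReflTransGen.lift f (fun _ _ hab => hf hab) _ _ h

lemma ccbase_shapes {t u : Tm C} (h : CCBase t u) :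
    (∃ f a, t = .app f a) ∨ (∃ p, t = .proj1 p) ∨ (∃ p, t = .proj2 p) ∨
    (∃ s bl br, t = .case s bl br) := by
  rcases ccbase_inv h with ⟨e, r, he, _⟩ | ⟨e, s, bl, br, he, _⟩ <;>
    cases e <;> simp [plug] at he ⊢ <;> subst he <;> simp [plug]

lemma ccbase_app_inv {f w u : Tm C} (h : CCBase (.app f w) u) :
    (∃ r, f = .raise r ∧ u = .raise r) ∨
    (∃ s bl br, f = .case s bl br ∧
      u = .case s (.app bl (rename Nat.succ w)) (.app br (rename Nat.succ w))) := by
  rcases ccbase_inv h with ⟨e, r, he, hu⟩ | ⟨e, s, bl, br, he, hu⟩ <;>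
    cases e <;> simp [plug] at he <;> subst hu
  · obtain ⟨h1, h2⟩ := he; subst h2; exact .inl ⟨r, h1, rfl⟩
  · obtain ⟨h1, h2⟩ := he; subst h2; exact .inr ⟨s, bl, br, h1, rfl⟩

lemma ccbase_proj1_inv {p u : Tm C} (h : CCBase (.proj1 p) u) :
    (∃ r, p = .raise r ∧ u = .raise r) ∨
    (∃ s bl br, p = .case s bl br ∧ u = .case s (.proj1 bl) (.proj1 br)) := by
  rcases ccbase_inv h with ⟨e, r, he, hu⟩ | ⟨e, s, bl, br, he, hu⟩ <;>
    cases e <;> simp [plug] at he <;> subst hu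
  · exact .inl ⟨r, he, rfl⟩
  · exact .inr ⟨s, bl, br, he, rfl⟩

lemma ccbase_proj2_inv {p u : Tm C} (h : CCBase (.proj2 p) u) :
    (∃ r, p = .raise r ∧ u = .raise r) ∨
    (∃ s bl br, p = .case s bl br ∧ u = .case s (.proj2 bl) (.proj2 br)) := by
  rcases ccbase_inv h with ⟨e, r, he, hu⟩ | ⟨e, s, bl, br, he, hu⟩ <;>
    cases e <;> simp [plug] at he <;> subst hu
  · exact .inl ⟨r, he, rfl⟩
  · exact .inr ⟨s, bl, br, he, rfl⟩

lemma ccbase_case_inv {s0 cl cr u : Tm C} (h : CCBase (.case s0 cl cr) u) :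
    (∃ r, s0 = .raise r ∧ u = .raise r) ∨
    (∃ s bl br, s0 = .case s bl br ∧
      u = .case s
        (.case bl (rename (liftRen Nat.succ) cl) (rename (liftRen Nat.succ) cr))
        (.case br (rename (liftRen Nat.succ) cl) (rename (liftRen Nat.succ) cr))) := by
  rcases ccbase_inv h with ⟨e, r, he, hu⟩ | ⟨e, s, bl, br, he, hu⟩ <;>
    cases e <;> simp [plug] at he <;> subst hu
  · obtain ⟨h1, h2, h3⟩ := he; subst h2; subst h3; exact .inl ⟨r, h1, rfl⟩
  · obtain ⟨h1, h2, h3⟩ := he; subst h2; subst h3; exact .inr ⟨s, bl, br, h1, rfl⟩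

end Aux3

section Aux4
variable {C : Type}
open Relation

/-- Parallel β-reduction. -/
inductive Par : Tm C → Tm C → Prop
  | cst (c : C) : Par (.cst c) (.cst c)
  | var (n : Nat) : Par (.var n) (.var n)
  | star : Par .star .star
  | pair : Par t t' → Par u u' → Par (.pair t u) (.pair t' u')
  | proj1 : Par t t' → Par (.proj1 t) (.proj1 t')
  | proj2 : Par t t' → Par (.proj2 t) (.proj2 t')
  | lam : Par t t' → Par (.lam t) (.lam t')
  | app : Par t t' → Par u u' → Par (.app t u) (.app t' u')
  | inl : Par t t' → Par (.inl t) (.inl t')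
  | inr : Par t t' → Par (.inr t) (.inr t')
  | raise : Par t t' → Par (.raise t) (.raise t')
  | case : Par s s' → Par bl bl' → Par br br' →
      Par (.case s bl br) (.case s' bl' br')
  | beta1 : Par t t' → Par (.proj1 (.pair t u)) t'
  | beta2 : Par u u' → Par (.proj2 (.pair t u)) u'
  | betaApp : Par t t' → Par u u' → Par (.app (.lam t) u) (subst (sub0 u') t')
  | betaInl : Par a a' → Par bl bl' → Par (.case (.inl a) bl br) (subst (sub0 a') bl')
  | betaInr : Par b b' → Par br br' → Par (.case (.inr b) bl br) (subst (sub0 b') br')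

lemma par_refl (t : Tm C) : Par t t := by
  induction t
  case cst c => exact .cst c
  case var n => exact .var n
  case star => exact .star
  case pair => exact .pair ‹_› ‹_›
  case proj1 => exact .proj1 ‹_›
  case proj2 => exact .proj2 ‹_›
  case lam => exact .lam ‹_›
  case app => exact .app ‹_› ‹_›
  case inl => exact .inl ‹_›
  case inr => exact .inr ‹_›
  case raise => exact .raise ‹_›
  case case => exact .case ‹_› ‹_› ‹_›

lemma par_rename {t u : Tm C} (h : Par t u) (ρ : Nat → Nat) :
    Par (rename ρ t) (rename ρ u) := by
  induction h generalizing ρ with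
  | cst c => exact .cst c
  | var n => exact .var _
  | star => exact .star
  | pair _ _ ih1 ih2 => exact .pair (ih1 ρ) (ih2 ρ)
  | proj1 _ ih => exact .proj1 (ih ρ)
  | proj2 _ ih => exact .proj2 (ih ρ)
  | lam _ ih => exact .lam (ih (liftRen ρ))
  | app _ _ ih1 ih2 => exact .app (ih1 ρ) (ih2 ρ)
  | inl _ ih => exact .inl (ih ρ)
  | inr _ ih => exact .inr (ih ρ)
  | raise _ ih => exact .raise (ih ρ)
  | case _ _ _ ih1 ih2 ih3 => exact .case (ih1 ρ) (ih2 (liftRen ρ)) (ih3 (liftRen ρ))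
  | beta1 _ ih => exact .beta1 (ih ρ)
  | beta2 _ ih => exact .beta2 (ih ρ)
  | betaApp _ _ ih1 ih2 =>
    simpa [rename, rename_subst0] using Par.betaApp (ih1 (liftRen ρ)) (ih2 ρ)
  | betaInl _ _ ih1 ih2 =>
    simpa [rename, rename_subst0] using Par.betaInl (ih1 ρ) (ih2 (liftRen ρ))
  | betaInr _ _ ih1 ih2 =>
    simpa [rename, rename_subst0] using Par.betaInr (ih1 ρ) (ih2 (liftRen ρ))

lemma stepBeta_par {t u : Tm C} (h : StepBeta t u) : Par t u := by
  induction h with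
  | base h =>
    cases h with
    | proj1 t1 u1 => exact .beta1 (par_refl _)
    | proj2 t1 u1 => exact .beta2 (par_refl _)
    | app t1 u1 => exact .betaApp (par_refl _) (par_refl _)
    | case_inl a1 bl1 br1 => exact .betaInl (par_refl _) (par_refl _)
    | case_inr b1 bl1 br1 => exact .betaInr (par_refl _) (par_refl _)
  | pairL _ ih => exact .pair ih (par_refl _)
  | pairR _ ih => exact .pair (par_refl _) ih
  | proj1 _ ih => exact .proj1 ih
  | proj2 _ ih => exact .proj2 ih
  | lam _ ih => exact .lam ih
  | appL _ ih => exact .app ih (par_refl _)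
  | appR _ ih => exact .app (par_refl _) ih
  | inl _ ih => exact .inl ih
  | inr _ ih => exact .inr ih
  | raise _ ih => exact .raise ih
  | caseS _ ih => exact .case ih (par_refl _) (par_refl _)
  | caseL _ ih => exact .case (par_refl _) ih (par_refl _)
  | caseR _ ih => exact .case (par_refl _) (par_refl _) ih

lemma par_redsBeta {t u : Tm C} (h : Par t u) : RedsBeta t u := by
  induction h with
  | cst c => exact .refl
  | var n => exact .refl
  | star => exact .refl
  | pair _ _ ih1 ih2 =>
    exact (reds_lift (fun x => .pair x _) .pairL ih1).trans
      (reds_lift (fun x => .pair _ x) .pairR ih2)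
  | proj1 _ ih => exact reds_lift (fun x => .proj1 x) .proj1 ih
  | proj2 _ ih => exact reds_lift (fun x => .proj2 x) .proj2 ih
  | lam _ ih => exact reds_lift (fun x => .lam x) .lam ih
  | app _ _ ih1 ih2 =>
    exact (reds_lift (fun x => .app x _) .appL ih1).trans
      (reds_lift (fun x => .app _ x) .appR ih2)
  | inl _ ih => exact reds_lift (fun x => .inl x) .inl ih
  | inr _ ih => exact reds_lift (fun x => .inr x) .inr ih
  | raise _ ih => exact reds_lift (fun x => .raise x) .raise ih
  | case _ _ _ ih1 ih2 ih3 =>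
    exact ((reds_lift (fun x => .case x _ _) .caseS ih1).trans
      (reds_lift (fun x => .case _ x _) .caseL ih2)).trans
      (reds_lift (fun x => .case _ _ x) .caseR ih3)
  | beta1 _ ih =>
    exact .tail (reds_lift (fun x => .proj1 (.pair x _)) (fun h => .proj1 (.pairL h)) ih)
      (.base (.proj1 _ _))
  | beta2 _ ih =>
    exact .tail (reds_lift (fun x => .proj2 (.pair _ x)) (fun h => .proj2 (.pairR h)) ih)
      (.base (.proj2 _ _))
  | betaApp _ _ ih1 ih2 =>
    refine .tail (ReflTransGen.trans
      (reds_lift (fun x => .app (.lam x) _) (fun h => .appL (.lam h)) ih1)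
      (reds_lift (fun x => .app _ x) .appR ih2)) (.base (.app _ _))
  | betaInl _ _ ih1 ih2 =>
    refine .tail (ReflTransGen.trans
      (reds_lift (fun x => .case (.inl x) _ _) (fun h => .caseS (.inl h)) ih1)
      (reds_lift (fun x => .case _ x _) .caseL ih2)) (.base (.case_inl _ _ _))
  | betaInr _ _ ih1 ih2 =>
    refine .tail (ReflTransGen.trans
      (reds_lift (fun x => .case (.inr x) _ _) (fun h => .caseS (.inr h)) ih1)
      (reds_lift (fun x => .case _ _ x) .caseR ih2)) (.base (.case_inr _ _ _))

lemma redsCC_rename (ρ : Nat → Nat) {t u : Tm C} (h : RedsCC t u) :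
    RedsCC (rename ρ t) (rename ρ u) := by
  exact ReflTransGen.lift (rename ρ) (fun _ _ hab => stepCC_rename ρ hab) _ _ h

lemma liftSub_redsCC {σ σ' : Nat → Tm C} (h : ∀ n, RedsCC (σ n) (σ' n)) :
    ∀ n, RedsCC (liftSub σ n) (liftSub σ' n) := by
  intro n; cases n with
  | zero => exact .refl
  | succ n => exact redsCC_rename Nat.succ (h n)

lemma redsCC_subst_t (σ : Nat → Tm C) {t u : Tm C} (h : RedsCC t u) :
    RedsCC (subst σ t) (subst σ u) :=
  ReflTransGen.lift (subst σ) (fun _ _ hab => stepCC_subst σ hab) _ _ h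

lemma redsCC_subst_sigma {σ σ' : Nat → Tm C} (h : ∀ n, RedsCC (σ n) (σ' n))
    (t : Tm C) : RedsCC (subst σ t) (subst σ' t) := by
  induction t generalizing σ σ' with
  | cst c => exact .refl
  | var n => exact h n
  | star => exact .refl
  | pair t u iht ihu =>
    exact (reds_lift (fun x => .pair x _) Cong.pairL (iht h)).trans
      (reds_lift (fun x => .pair _ x) Cong.pairR (ihu h))
  | proj1 t iht => exact reds_lift (fun x => .proj1 x) Cong.proj1 (iht h)
  | proj2 t iht => exact reds_lift (fun x => .proj2 x) Cong.proj2 (iht h)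
  | lam t iht =>
    exact reds_lift (fun x => .lam x) Cong.lam (iht (liftSub_redsCC h))
  | app t u iht ihu =>
    exact (reds_lift (fun x => .app x _) Cong.appL (iht h)).trans
      (reds_lift (fun x => .app _ x) Cong.appR (ihu h))
  | inl t iht => exact reds_lift (fun x => .inl x) Cong.inl (iht h)
  | inr t iht => exact reds_lift (fun x => .inr x) Cong.inr (iht h)
  | raise t iht => exact reds_lift (fun x => .raise x) Cong.raise (iht h)
  | case s bl br ihs ihl ihr =>
    have hlift := liftSub_redsCC h
    exact ((reds_lift (fun x => .case x _ _) Cong.caseS (ihs h)).trans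
      (reds_lift (fun x => .case _ x _) Cong.caseL (ihl hlift))).trans
      (reds_lift (fun x => .case _ _ x) Cong.caseR (ihr hlift))

lemma redsCC_sub0 {u u' : Tm C} (h : RedsCC u u') (t : Tm C) :
    RedsCC (subst (sub0 u) t) (subst (sub0 u') t) := by
  refine redsCC_subst_sigma ?_ t
  intro n; cases n with
  | zero => exact h
  | succ n => exact .refl

end Aux4

section Aux5
variable {C : Type}
open Relation

lemma par_cc {t u : Tm C} (hp : Par t u) :
    ∀ u', StepCC t u' → ∃ v, RedsCC u v ∧ Par u' v := by
  induction hp with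
  | cst c =>
    intro u' hc
    cases hc with
    | base hb =>
      rcases ccbase_shapes hb with ⟨_, _, h⟩ | ⟨_, h⟩ | ⟨_, h⟩ | ⟨_, _, _, h⟩ <;> simp at h
  | var n =>
    intro u' hc
    cases hc with
    | base hb =>
      rcases ccbase_shapes hb with ⟨_, _, h⟩ | ⟨_, h⟩ | ⟨_, h⟩ | ⟨_, _, _, h⟩ <;> simp at h
  | star =>
    intro u' hc
    cases hc with
    | base hb =>
      rcases ccbase_shapes hb with ⟨_, _, h⟩ | ⟨_, h⟩ | ⟨_, h⟩ | ⟨_, _, _, h⟩ <;> simp at h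
  | pair h1 h2 ih1 ih2 =>
    intro u' hc
    cases hc with
    | base hb =>
      rcases ccbase_shapes hb with ⟨_, _, h⟩ | ⟨_, h⟩ | ⟨_, h⟩ | ⟨_, _, _, h⟩ <;> simp at h
    | pairL hc1 =>
      obtain ⟨a3, r, pa⟩ := ih1 _ hc1
      exact ⟨.pair a3 _, reds_lift (fun x => .pair x _) Cong.pairL r, .pair pa h2⟩
    | pairR hc2 =>
      obtain ⟨b3, r, pb⟩ := ih2 _ hc2
      exact ⟨.pair _ b3, reds_lift (fun x => .pair _ x) Cong.pairR r, .pair h1 pb⟩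
  | proj1 h1 ih1 =>
    intro u' hc
    cases hc with
    | base hb =>
      rcases ccbase_proj1_inv hb with ⟨r, heq, hu⟩ | ⟨s, bl, br, heq, hu⟩
      · subst heq; subst hu
        cases h1 with
        | raise hr =>
          exact ⟨_, ReflTransGen.single (.base (CCBase.raise .eproj1 _)), .raise hr⟩
      · subst heq; subst hu
        cases h1 with
        | case hs hbl hbr =>
          exact ⟨_, ReflTransGen.single (.base (CCBase.case .eproj1 _ _ _)),
            .case hs (.proj1 hbl) (.proj1 hbr)⟩
        | betaInl ha hbl =>
          exact ⟨_, .refl, .betaInl ha (.proj1 hbl)⟩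
        | betaInr hb' hbr =>
          exact ⟨_, .refl, .betaInr hb' (.proj1 hbr)⟩
    | proj1 hc1 =>
      obtain ⟨p3, r, pp⟩ := ih1 _ hc1
      exact ⟨.proj1 p3, reds_lift (fun x => .proj1 x) Cong.proj1 r, .proj1 pp⟩
  | proj2 h1 ih1 =>
    intro u' hc
    cases hc with
    | base hb =>
      rcases ccbase_proj2_inv hb with ⟨r, heq, hu⟩ | ⟨s, bl, br, heq, hu⟩
      · subst heq; subst hu
        cases h1 with
        | raise hr =>
          exact ⟨_, ReflTransGen.single (.base (CCBase.raise .eproj2 _)), .raise hr⟩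
      · subst heq; subst hu
        cases h1 with
        | case hs hbl hbr =>
          exact ⟨_, ReflTransGen.single (.base (CCBase.case .eproj2 _ _ _)),
            .case hs (.proj2 hbl) (.proj2 hbr)⟩
        | betaInl ha hbl =>
          exact ⟨_, .refl, .betaInl ha (.proj2 hbl)⟩
        | betaInr hb' hbr =>
          exact ⟨_, .refl, .betaInr hb' (.proj2 hbr)⟩
    | proj2 hc1 =>
      obtain ⟨p3, r, pp⟩ := ih1 _ hc1
      exact ⟨.proj2 p3, reds_lift (fun x => .proj2 x) Cong.proj2 r, .proj2 pp⟩
  | lam h1 ih1 =>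
    intro u' hc
    cases hc with
    | base hb =>
      rcases ccbase_shapes hb with ⟨_, _, h⟩ | ⟨_, h⟩ | ⟨_, h⟩ | ⟨_, _, _, h⟩ <;> simp at h
    | lam hc1 =>
      obtain ⟨b3, r, pb⟩ := ih1 _ hc1
      exact ⟨.lam b3, reds_lift (fun x => .lam x) Cong.lam r, .lam pb⟩
  | @app f f' w w' h1 h2 ih1 ih2 =>
    intro u' hc
    cases hc with
    | base hb =>
      rcases ccbase_app_inv hb with ⟨r, heq, hu⟩ | ⟨s, bl, br, heq, hu⟩
      · subst heq; subst hu
        cases h1 with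
        | raise hr =>
          exact ⟨_, ReflTransGen.single (.base (CCBase.raise (.eapp _) _)), .raise hr⟩
      · subst heq; subst hu
        cases h1 with
        | case hs hbl hbr =>
          exact ⟨_, ReflTransGen.single (.base (CCBase.case (.eapp _) _ _ _)),
            .case hs (.app hbl (par_rename h2 Nat.succ)) (.app hbr (par_rename h2 Nat.succ))⟩
        | @betaInl a a' l l' rr ha hbl =>
          refine ⟨_, .refl, ?_⟩
          have h3 : Par (Tm.case (.inl a) (.app bl (rename Nat.succ w)) (.app br (rename Nat.succ w)))
              (subst (sub0 a') (.app l' (rename Nat.succ w'))) :=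
            Par.betaInl ha (.app hbl (par_rename h2 Nat.succ))
          simpa [subst, subst0_rename] using h3
        | @betaInr b b' rr rr' l hb' hbr =>
          refine ⟨_, .refl, ?_⟩
          have h3 : Par (Tm.case (.inr b) (.app bl (rename Nat.succ w)) (.app br (rename Nat.succ w)))
              (subst (sub0 b') (.app rr' (rename Nat.succ w'))) :=
            Par.betaInr hb' (.app hbr (par_rename h2 Nat.succ))
          simpa [subst, subst0_rename] using h3
    | appL hc1 =>
      obtain ⟨f3, r, pf⟩ := ih1 _ hc1
      exact ⟨.app f3 _, reds_lift (fun x => .app x _) Cong.appL r, .app pf h2⟩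
    | appR hc2 =>
      obtain ⟨w3, r, pw⟩ := ih2 _ hc2
      exact ⟨.app _ w3, reds_lift (fun x => .app _ x) Cong.appR r, .app h1 pw⟩
  | inl h1 ih1 =>
    intro u' hc
    cases hc with
    | base hb =>
      rcases ccbase_shapes hb with ⟨_, _, h⟩ | ⟨_, h⟩ | ⟨_, h⟩ | ⟨_, _, _, h⟩ <;> simp at h
    | inl hc1 =>
      obtain ⟨a3, r, pa⟩ := ih1 _ hc1
      exact ⟨.inl a3, reds_lift (fun x => .inl x) Cong.inl r, .inl pa⟩
  | inr h1 ih1 =>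
    intro u' hc
    cases hc with
    | base hb =>
      rcases ccbase_shapes hb with ⟨_, _, h⟩ | ⟨_, h⟩ | ⟨_, h⟩ | ⟨_, _, _, h⟩ <;> simp at h
    | inr hc1 =>
      obtain ⟨a3, r, pa⟩ := ih1 _ hc1
      exact ⟨.inr a3, reds_lift (fun x => .inr x) Cong.inr r, .inr pa⟩
  | raise h1 ih1 =>
    intro u' hc
    cases hc with
    | base hb =>
      rcases ccbase_shapes hb with ⟨_, _, h⟩ | ⟨_, h⟩ | ⟨_, h⟩ | ⟨_, _, _, h⟩ <;> simp at h
    | raise hc1 =>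
      obtain ⟨a3, r, pa⟩ := ih1 _ hc1
      exact ⟨.raise a3, reds_lift (fun x => .raise x) Cong.raise r, .raise pa⟩
  | @case s s' cl cl' cr cr' hs hbl hbr ihs ihl ihr =>
    intro u' hc
    cases hc with
    | base hb =>
      rcases ccbase_case_inv hb with ⟨r, heq, hu⟩ | ⟨s0, c1, c2, heq, hu⟩
      · subst heq; subst hu
        cases hs with
        | raise hr =>
          exact ⟨_, ReflTransGen.single (.base (CCBase.raise (.ecase _ _) _)), .raise hr⟩
      · subst heq; subst hu
        cases hs with
        | case hs0 hc1 hc2 =>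
          exact ⟨_, ReflTransGen.single (.base (CCBase.case (.ecase _ _) _ _ _)),
            .case hs0
              (.case hc1 (par_rename hbl (liftRen Nat.succ)) (par_rename hbr (liftRen Nat.succ)))
              (.case hc2 (par_rename hbl (liftRen Nat.succ)) (par_rename hbr (liftRen Nat.succ)))⟩
        | @betaInl a a' d1 d1' d2 ha hinner =>
          refine ⟨_, .refl, ?_⟩
          have h3 : Par (Tm.case (.inl a)
                (.case c1 (rename (liftRen Nat.succ) cl) (rename (liftRen Nat.succ) cr))
                (.case c2 (rename (liftRen Nat.succ) cl) (rename (liftRen Nat.succ) cr)))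
              (subst (sub0 a') (.case d1' (rename (liftRen Nat.succ) cl') (rename (liftRen Nat.succ) cr'))) :=
            Par.betaInl ha (.case hinner (par_rename hbl (liftRen Nat.succ)) (par_rename hbr (liftRen Nat.succ)))
          simpa [subst, subst0_lift_rename] using h3
        | @betaInr b b' d2 d2' d1 hb' hinner =>
          refine ⟨_, .refl, ?_⟩
          have h3 : Par (Tm.case (.inr b)
                (.case c1 (rename (liftRen Nat.succ) cl) (rename (liftRen Nat.succ) cr))
                (.case c2 (rename (liftRen Nat.succ) cl) (rename (liftRen Nat.succ) cr)))
              (subst (sub0 b') (.case d2' (rename (liftRen Nat.succ) cl') (rename (liftRen Nat.succ) cr'))) :=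
            Par.betaInr hb' (.case hinner (par_rename hbl (liftRen Nat.succ)) (par_rename hbr (liftRen Nat.succ)))
          simpa [subst, subst0_lift_rename] using h3
    | caseS hc1 =>
      obtain ⟨s3, r, ps⟩ := ihs _ hc1
      exact ⟨.case s3 _ _, reds_lift (fun x => .case x _ _) Cong.caseS r, .case ps hbl hbr⟩
    | caseL hc1 =>
      obtain ⟨bl3, r, pb⟩ := ihl _ hc1
      exact ⟨.case _ bl3 _, reds_lift (fun x => .case _ x _) Cong.caseL r, .case hs pb hbr⟩
    | caseR hc1 =>
      obtain ⟨br3, r, pb⟩ := ihr _ hc1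
      exact ⟨.case _ _ br3, reds_lift (fun x => .case _ _ x) Cong.caseR r, .case hs hbl pb⟩
  | beta1 h1 ih1 =>
    intro u' hc
    cases hc with
    | base hb =>
      rcases ccbase_proj1_inv hb with ⟨r, heq, hu⟩ | ⟨s, bl, br, heq, hu⟩ <;> simp at heq
    | proj1 hc1 =>
      cases hc1 with
      | base hb =>
        rcases ccbase_shapes hb with ⟨_, _, h⟩ | ⟨_, h⟩ | ⟨_, h⟩ | ⟨_, _, _, h⟩ <;> simp at h
      | pairL hc2 =>
        obtain ⟨a3, r, pa⟩ := ih1 _ hc2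
        exact ⟨a3, r, .beta1 pa⟩
      | pairR hc2 =>
        exact ⟨_, .refl, .beta1 h1⟩
  | beta2 h1 ih1 =>
    intro u' hc
    cases hc with
    | base hb =>
      rcases ccbase_proj2_inv hb with ⟨r, heq, hu⟩ | ⟨s, bl, br, heq, hu⟩ <;> simp at heq
    | proj2 hc1 =>
      cases hc1 with
      | base hb =>
        rcases ccbase_shapes hb with ⟨_, _, h⟩ | ⟨_, h⟩ | ⟨_, h⟩ | ⟨_, _, _, h⟩ <;> simp at h
      | pairL hc2 =>
        exact ⟨_, .refl, .beta2 h1⟩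
      | pairR hc2 =>
        obtain ⟨b3, r, pb⟩ := ih1 _ hc2
        exact ⟨b3, r, .beta2 pb⟩
  | betaApp h1 h2 ih1 ih2 =>
    intro u' hc
    cases hc with
    | base hb =>
      rcases ccbase_app_inv hb with ⟨r, heq, hu⟩ | ⟨s, bl, br, heq, hu⟩ <;> simp at heq
    | appL hc1 =>
      cases hc1 with
      | base hb =>
        rcases ccbase_shapes hb with ⟨_, _, h⟩ | ⟨_, h⟩ | ⟨_, h⟩ | ⟨_, _, _, h⟩ <;> simp at h
      | lam hc2 =>
        obtain ⟨b3, r, pb⟩ := ih1 _ hc2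
        exact ⟨subst (sub0 _) b3, redsCC_subst_t _ r, .betaApp pb h2⟩
    | appR hc2 =>
      obtain ⟨w3, r, pw⟩ := ih2 _ hc2
      exact ⟨subst (sub0 w3) _, redsCC_sub0 r _, .betaApp h1 pw⟩
  | betaInl ha hbl iha ihbl =>
    intro u' hc
    cases hc with
    | base hb =>
      rcases ccbase_case_inv hb with ⟨r, heq, hu⟩ | ⟨s, bl, br, heq, hu⟩ <;> simp at heq
    | caseS hc1 =>
      cases hc1 with
      | base hb =>
        rcases ccbase_shapes hb with ⟨_, _, h⟩ | ⟨_, h⟩ | ⟨_, h⟩ | ⟨_, _, _, h⟩ <;> simp at h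
      | inl hc2 =>
        obtain ⟨a3, r, pa⟩ := iha _ hc2
        exact ⟨subst (sub0 a3) _, redsCC_sub0 r _, .betaInl pa hbl⟩
    | caseL hc1 =>
      obtain ⟨bl3, r, pb⟩ := ihbl _ hc1
      exact ⟨subst (sub0 _) bl3, redsCC_subst_t _ r, .betaInl ha pb⟩
    | caseR hc1 =>
      exact ⟨_, .refl, .betaInl ha hbl⟩
  | betaInr hb' hbr ihb ihbr =>
    intro u' hc
    cases hc with
    | base hb =>
      rcases ccbase_case_inv hb with ⟨r, heq, hu⟩ | ⟨s, bl, br, heq, hu⟩ <;> simp at heq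
    | caseS hc1 =>
      cases hc1 with
      | base hb =>
        rcases ccbase_shapes hb with ⟨_, _, h⟩ | ⟨_, h⟩ | ⟨_, h⟩ | ⟨_, _, _, h⟩ <;> simp at h
      | inr hc2 =>
        obtain ⟨b3, r, pb⟩ := ihb _ hc2
        exact ⟨subst (sub0 b3) _, redsCC_sub0 r _, .betaInr pb hbr⟩
    | caseL hc1 =>
      exact ⟨_, .refl, .betaInr hb' hbr⟩
    | caseR hc1 =>
      obtain ⟨br3, r, pb⟩ := ihbr _ hc1
      exact ⟨subst (sub0 _) br3, redsCC_subst_t _ r, .betaInr hb' pb⟩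

end Aux5

section Aux6
variable {C : Type}
open Relation

lemma par_strip {t u u' : Tm C} (hp : Par t u) (hc : RedsCC t u') :
    ∃ v, RedsCC u v ∧ Par u' v := by
  induction hc with
  | refl => exact ⟨u, .refl, hp⟩
  | tail _ hstep ih =>
    obtain ⟨w, hw1, hw2⟩ := ih
    obtain ⟨v, hv1, hv2⟩ := par_cc hw2 _ hstep
    exact ⟨v, hw1.trans hv1, hv2⟩

lemma rtgPar_redsBeta {t u : Tm C} (h : ReflTransGen Par t u) : RedsBeta t u := by
  induction h with
  | refl => exact .refl
  | tail _ hstep ih => exact ih.trans (par_redsBeta hstep)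

end Aux6

/-- **Commutation of β-reduction and commuting conversions.** -/
theorem beta_cc_commute {C : Type} (t u u' : Tm C)
    (hb : RedsBeta t u) (hc : RedsCC t u') :
    ∃ v : Tm C, RedsCC u v ∧ RedsBeta u' v := by
  have hb' : Relation.ReflTransGen Par t u := Relation.ReflTransGen.mono (fun a b h => stepBeta_par h) _ _ hb
  clear hb
  induction hb' with
  | refl => exact ⟨u', hc, .refl⟩
  | tail _ hstep ih =>
    obtain ⟨w, hw1, hw2⟩ := ih
    obtain ⟨v, hv1, hv2⟩ := par_strip hstep hw1
    exact ⟨v, hv1, hw2.trans (par_redsBeta hv2)⟩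

end STLCp
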